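/- Let f be a holomorphic function on ℂ satisfying f'(z) = λe^{cz} f(z) + (1 − λe^{cz})α(z), where λ, c are nonzero complex constants and α is meromorphic such that (1−λe^{cz})α is entire. Then for every n ≥ 1, f^{(n)} = A_n f + B_n, where A_n = Σ_{k=1}^{n} S(n,k) λ^k c^{n-k} e^{kcz}, and A_n, B_n satisfy the recursion A_{n+1} = A_n' + A_n·λe^{cz}, B_{n+1} = A_n(1−λe^{cz})α + B_n', with A_1 = λe^{cz}, B_1 = (1−λe^{cz})α. -/

import Mathlib

open Finset

/-- Stirling numbers of the second kind. -/
def S2 : ℕ → ℕ → ℕ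
  | 0, 0 => 1
  | 0, _ + 1 => 0
  | _ + 1, 0 => 0
  | n + 1, k + 1 => S2 n k + (k + 1) * S2 n (k + 1)

/-- Signed Stirling numbers of the first kind. -/
def s1 : ℕ → ℕ → ℤ
  | 0, 0 => 1
  | 0, _ + 1 => 0
  | n + 1, 0 => -(n : ℤ) * s1 n 0
  | n + 1, k + 1 => s1 n k - (n : ℤ) * s1 n (k + 1)

open Complex

lemma S2_eq_zero : ∀ {n k : ℕ}, n < k → S2 n k = 0 := by
  intro n
  induction n with
  | zero =>
    intro k h
    cases k with
    | zero => omega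
    | succ k => rfl
  | succ n ih =>
    intro k h
    cases k with
    | zero => omega
    | succ k =>
      show S2 n k + (k + 1) * S2 n (k + 1) = 0
      rw [ih (by omega), ih (by omega), mul_zero, add_zero]

lemma S2_zero_right : ∀ n : ℕ, 1 ≤ n → S2 n 0 = 0 := by
  intro n hn
  cases n with
  | zero => omega
  | succ n => rfl

lemma sum_Icc_one (n : ℕ) (F : ℕ → ℂ) (h0 : F 0 = 0) :
    ∑ k ∈ Icc 1 n, F k = ∑ k ∈ Finset.range (n + 1), F k := by
  have h : Finset.range (n + 1) = insert 0 (Icc 1 n) := by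
    ext k
    simp only [Finset.mem_range, Finset.mem_insert, Finset.mem_Icc]
    omega
  rw [h, Finset.sum_insert (by simp), h0, zero_add]

theorem iterated_deriv_formula (f α : ℂ → ℂ) (lam c : ℂ) (hlam : lam ≠ 0) (hc : c ≠ 0)
    (hf : Differentiable ℂ f)
    (hα : MeromorphicOn α Set.univ)
    (hg : Differentiable ℂ (fun z => (1 - lam * Complex.exp (c * z)) * α z))
    (hode : ∀ z, deriv f z = lam * Complex.exp (c * z) * f z +
      (1 - lam * Complex.exp (c * z)) * α z)
    (A B : ℕ → ℂ → ℂ)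
    (hA1 : ∀ z, A 1 z = lam * Complex.exp (c * z))
    (hB1 : ∀ z, B 1 z = (1 - lam * Complex.exp (c * z)) * α z)
    (hArec : ∀ n, 1 ≤ n → ∀ z,
      A (n + 1) z = deriv (A n) z + A n z * (lam * Complex.exp (c * z)))
    (hBrec : ∀ n, 1 ≤ n → ∀ z,
      B (n + 1) z = A n z * ((1 - lam * Complex.exp (c * z)) * α z) + deriv (B n) z) :
    ∀ n, 1 ≤ n →
      (∀ z, iteratedDeriv n f z = A n z * f z + B n z) ∧
      (∀ z, A n z = ∑ k ∈ Icc 1 n,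
        (S2 n k : ℂ) * lam ^ k * c ^ (n - k) * Complex.exp ((k : ℂ) * c * z)) := by
  have hitf : ∀ m : ℕ, Differentiable ℂ (iteratedDeriv m f) := by
    intro m
    exact hf.contDiff.differentiable_iteratedDeriv m
      (by exact_mod_cast (WithTop.coe_lt_top _))
  have hexp : ∀ (a : ℂ) (z : ℂ),
      HasDerivAt (fun z => Complex.exp (a * z)) (a * Complex.exp (a * z)) z := by
    intro a z
    simpa [mul_comm] using ((hasDerivAt_id z).const_mul a).cexp
  intro n hn
  induction n, hn using Nat.le_induction with
  | base =>
    constructor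
    · intro z
      rw [iteratedDeriv_one, hode z, hA1, hB1]
    · intro z
      rw [hA1]
      simp [S2]
  | succ n hn ih =>
    obtain ⟨ihf, ihA⟩ := ih
    have hAg : A n = fun z => ∑ k ∈ Finset.range (n + 1),
        (S2 n k : ℂ) * lam ^ k * c ^ (n - k) * Complex.exp ((k : ℂ) * c * z) := by
      funext z
      rw [ihA z, sum_Icc_one n _ (by rw [S2_zero_right n hn]; simp)]
    have hgd : ∀ z, HasDerivAt (fun z => ∑ k ∈ Finset.range (n + 1),
        (S2 n k : ℂ) * lam ^ k * c ^ (n - k) * Complex.exp ((k : ℂ) * c * z))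
        (∑ k ∈ Finset.range (n + 1),
        (S2 n k : ℂ) * lam ^ k * c ^ (n - k) *
          ((k : ℂ) * c * Complex.exp ((k : ℂ) * c * z))) z := by
      intro z
      apply HasDerivAt.fun_sum
      intro k _
      exact (hexp ((k : ℂ) * c) z).const_mul _
    have hAd : ∀ z, DifferentiableAt ℂ (A n) z := by
      intro z
      rw [hAg]
      exact (hgd z).differentiableAt
    have hBeq : B n = fun z => iteratedDeriv n f z - A n z * f z := by
      funext z
      rw [ihf z]
      ring
    have hBd : ∀ z, DifferentiableAt ℂ (B n) z := by
      intro z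
      rw [hBeq]
      exact ((hitf n z).sub ((hAd z).mul (hf z)))
    constructor
    · intro z
      have h2 : iteratedDeriv n f = fun z => A n z * f z + B n z := funext ihf
      rw [iteratedDeriv_succ, h2, deriv_fun_add ((hAd z).fun_mul (hf z)) (hBd z), deriv_fun_mul (hAd z) (hf z),
        hode z, hArec n hn z, hBrec n hn z]
      ring
    · intro z
      have hext : (∑ k ∈ Finset.range (n + 1),
          (S2 n k : ℂ) * lam ^ k * c ^ (n - k) *
            ((k : ℂ) * c * Complex.exp ((k : ℂ) * c * z)))
          = ∑ k ∈ Finset.range (n + 2),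
          (S2 n k : ℂ) * lam ^ k * c ^ (n - k) *
            ((k : ℂ) * c * Complex.exp ((k : ℂ) * c * z)) := by
        rw [Finset.sum_range_succ _ (n + 1), S2_eq_zero (show n < n + 1 by omega)]
        simp
      rw [hArec n hn z, hAg, (hgd z).deriv]
      beta_reduce
      rw [sum_Icc_one (n + 1) _ (by simp [show S2 (n+1) 0 = 0 from rfl]),
        hext, Finset.sum_range_succ' _ (n + 1), Finset.sum_range_succ' _ (n + 1)]
      simp only [Nat.cast_zero, zero_mul, mul_zero, add_zero, Nat.cast_ofNat,
        show S2 (n+1) 0 = 0 from rfl, pow_zero, Complex.exp_zero, mul_one]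
      rw [Finset.sum_mul, ← Finset.sum_add_distrib]
      apply Finset.sum_congr rfl
      intro k hk
      have hk' : k ≤ n := by
        simpa [Nat.lt_succ_iff] using Finset.mem_range.mp hk
      have hem : Complex.exp ((k : ℂ) * c * z) * (lam * Complex.exp (c * z))
          = lam * Complex.exp ((↑(k + 1) : ℂ) * c * z) := by
        have harg : ((↑(k + 1) : ℂ)) * c * z = (k : ℂ) * c * z + c * z := by
          push_cast; ring
        rw [harg, Complex.exp_add]
        ring
      have hS : S2 (n + 1) (k + 1) = S2 n k + (k + 1) * S2 n (k + 1) := rfl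
      rcases Nat.lt_or_ge k n with hlt | hge
      · have hnk : n - k = (n - (k + 1)) + 1 := by omega
        have hnk2 : n + 1 - (k + 1) = (n - (k + 1)) + 1 := by omega
        rw [mul_assoc _ _ (lam * Complex.exp (c * z)), hem, hS, hnk, hnk2]
        push_cast
        ring
      · have hkn : k = n := by omega
        subst hkn
        rw [mul_assoc _ _ (lam * Complex.exp (c * z)), hem, hS,
          S2_eq_zero (show k < k + 1 by omega)]
        simp only [Nat.sub_self, Nat.add_sub_cancel, mul_zero, add_zero, pow_zero]
        push_cast
        ring
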